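/- Let the discrete values satisfy the relations ∂ₓS_{i+1}ⁿ - ∂ₓSᵢⁿ = δx((ν_{i+1}ⁿ + νᵢⁿ)/2 - (ρ_{i+1}ⁿ + ρᵢⁿ)/2) with ∂ₓS₀ⁿ = 0, M₀ⁿ = 0, Mᵢⁿ = δx Σ_{j≤i} ρⱼⁿ. Then ∂ₓS_{i+1}ⁿ = -(1/2)(M_{i+1}ⁿ + Mᵢⁿ - δx(2Σ_{j=0}^i νⱼⁿ + ν_{i+1}ⁿ - ν₀ⁿ)). Consequently, if 0 ≤ Mᵢⁿ ≤ M and δx Σⱼ|νⱼⁿ| ≤ M w₀, then |∂ₓS_{i+1}ⁿ| ≤ M(1 + w₀). -/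

import Mathlib

theorem stmt_6 (δx M w₀ : ℝ) (hδx : 0 < δx)
    (dS ν ρ Mm : ℕ → ℝ)
    (hrel : ∀ i : ℕ, dS (i + 1) - dS i =
      δx * ((ν (i + 1) + ν i) / 2 - (ρ (i + 1) + ρ i) / 2))
    (hdS0 : dS 0 = 0)
    (hMm : ∀ i : ℕ, Mm i = δx * ∑ j ∈ Finset.range (i + 1), ρ j)
    (hM0 : Mm 0 = 0) :
    (∀ i : ℕ, dS (i + 1) =
      -(1 / 2) * (Mm (i + 1) + Mm i
        - δx * (2 * ∑ j ∈ Finset.range (i + 1), ν j + ν (i + 1) - ν 0))) ∧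
    ((∀ i, 0 ≤ Mm i ∧ Mm i ≤ M) →
      (∀ i : ℕ, δx * ∑ j ∈ Finset.range i, |ν j| ≤ M * w₀) →
      ∀ i : ℕ, |dS (i + 1)| ≤ M * (1 + w₀)) := by
  have hρ0 : ρ 0 = 0 := by
    have h := hMm 0
    rw [hM0, Finset.sum_range_one] at h
    rcases mul_eq_zero.mp h.symm with h' | h'
    · exact absurd h' (ne_of_gt hδx)
    · exact h'
  have key : ∀ i : ℕ, dS (i + 1) =
      -(1 / 2) * (Mm (i + 1) + Mm i
        - δx * (2 * ∑ j ∈ Finset.range (i + 1), ν j + ν (i + 1) - ν 0)) := by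
    intro i
    induction i with
    | zero =>
      have h := hrel 0
      rw [hdS0, sub_zero] at h
      rw [hM0, hMm 1]
      simp only [Finset.sum_range_succ, Finset.sum_range_zero, hρ0] at h ⊢
      linear_combination h
    | succ n ih =>
      have h := hrel (n + 1)
      rw [hMm, hMm] at ih ⊢
      simp only [Finset.sum_range_succ] at ih ⊢
      linear_combination h + ih
  refine ⟨key, ?_⟩
  intro hMb hνb i
  have hs : 2 * ∑ j ∈ Finset.range (i + 1), ν j + ν (i + 1) - ν 0
      = (∑ j ∈ Finset.range (i + 1), ν j)
        + (∑ j ∈ Finset.range (i + 1), ν (j + 1)) := by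
    have h1 := Finset.sum_range_succ' ν (i + 1)
    have h2 := Finset.sum_range_succ ν (i + 1)
    linarith [h1, h2]
  rw [key i, hs]
  set S1 := ∑ j ∈ Finset.range (i + 1), ν j with hS1
  set S2 := ∑ j ∈ Finset.range (i + 1), ν (j + 1) with hS2
  have hb1 : |S1| ≤ ∑ j ∈ Finset.range (i + 1), |ν j| :=
    Finset.abs_sum_le_sum_abs _ _
  have hb2 : |S2| ≤ ∑ j ∈ Finset.range (i + 2), |ν j| := by
    calc |S2| ≤ ∑ j ∈ Finset.range (i + 1), |ν (j + 1)| :=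
          Finset.abs_sum_le_sum_abs _ _
      _ ≤ ∑ j ∈ Finset.range (i + 2), |ν j| := by
          rw [Finset.sum_range_succ' (fun j => |ν j|) (i + 1)]
          have : (0:ℝ) ≤ |ν 0| := abs_nonneg _
          linarith
  have hν1 := hνb (i + 1)
  have hν2 := hνb (i + 2)
  have hM1 := hMb (i + 1)
  have hM2 := hMb i
  have h1 : |Mm (i + 1) + Mm i| ≤ 2 * M := by
    rw [abs_of_nonneg (by linarith [hM1.1, hM2.1])]
    linarith [hM1.2, hM2.2]
  have h2 : |δx * (S1 + S2)| ≤ 2 * (M * w₀) := by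
    rw [abs_mul, abs_of_pos hδx]
    have e1 : δx * |S1| ≤ M * w₀ :=
      le_trans (mul_le_mul_of_nonneg_left hb1 hδx.le) hν1
    have e2 : δx * |S2| ≤ M * w₀ :=
      le_trans (mul_le_mul_of_nonneg_left hb2 hδx.le) hν2
    have h3 := mul_le_mul_of_nonneg_left (abs_add_le S1 S2) hδx.le
    rw [mul_add] at h3
    linarith
  calc |(-(1 / 2)) * (Mm (i + 1) + Mm i - δx * (S1 + S2))|
      = (1 / 2) * |Mm (i + 1) + Mm i - δx * (S1 + S2)| := by
        rw [abs_mul]; norm_num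
    _ ≤ (1 / 2) * (|Mm (i + 1) + Mm i| + |δx * (S1 + S2)|) := by
        gcongr; exact abs_sub _ _
    _ ≤ M * (1 + w₀) := by linarith
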